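/- Let k ≥ 1 and let C ∈ T_n(F_q) be a matrix whose diagonal entries c₁₁, …, c_nn are pairwise distinct and each of which is a k-th power in F_q. Then there exists A ∈ T_n(F_q) with C = A^k. -/

import Mathlib

lemma blockTriangular_pow {n : ℕ} {F : Type*} [CommRing F]
    (M : Matrix (Fin n) (Fin n) F) (h : M.BlockTriangular id) (m : ℕ) :
    (M ^ m).BlockTriangular id := by
  induction m with
  | zero => simpa using Matrix.blockTriangular_one
  | succ m ih => rw [pow_succ]; exact ih.mul h

lemma blockTriangular_aeval {n : ℕ} {F : Type*} [CommRing F]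
    (M : Matrix (Fin n) (Fin n) F) (h : M.BlockTriangular id) (p : Polynomial F) :
    ((Polynomial.aeval M) p).BlockTriangular id := by
  induction p using Polynomial.induction_on' with
  | add p q hp hq => rw [map_add]; exact hp.add hq
  | monomial m a =>
      rw [Polynomial.aeval_monomial]
      intro i j hij
      simp only [Matrix.mul_apply, Matrix.algebraMap_matrix_apply]
      refine Finset.sum_eq_zero fun l _ => ?_
      by_cases hil : i = l
      · subst hil
        rw [blockTriangular_pow M h m hij, mul_zero]
      · simp [hil]

/-- An upper triangular matrix whose diagonal entries are pairwise distinct `k`-th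
powers is itself a `k`-th power of an upper triangular matrix. -/
theorem stmt_16 (k n : ℕ) (hk : 1 ≤ k)
    (F : Type*) [Field F] [Fintype F]
    (C : Matrix (Fin n) (Fin n) F) (hC : C.BlockTriangular id)
    (hdistinct : ∀ i j : Fin n, i ≠ j → C i i ≠ C j j)
    (hpow : ∀ i : Fin n, ∃ x : F, x ^ k = C i i) :
    ∃ A : Matrix (Fin n) (Fin n) F, A.BlockTriangular id ∧ C = A ^ k := by
  choose x hx using hpow
  have hdinj : Function.Injective (fun i : Fin n => C i i) := by
    intro i j h
    by_contra hne
    exact hdistinct i j hne h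
  set g := Lagrange.interpolate Finset.univ (fun i : Fin n => C i i) x with hgdef
  have hg : ∀ i, g.eval (C i i) = x i := fun i =>
    Lagrange.eval_interpolate_at_node (s := Finset.univ) (v := fun i : Fin n => C i i) x (hdinj.injOn) (Finset.mem_univ i)
  have hdvd : C.charpoly ∣ g ^ k - Polynomial.X := by
    rw [Matrix.charpoly_of_upperTriangular C hC]
    apply Finset.prod_dvd_of_coprime
    · exact (Polynomial.pairwise_coprime_X_sub_C hdinj).set_pairwise _
    · intro i _
      rw [Polynomial.dvd_iff_isRoot]
      simp [Polynomial.IsRoot, hg i, hx i]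
  obtain ⟨q, hq⟩ := hdvd
  refine ⟨(Polynomial.aeval C) g, blockTriangular_aeval C hC g, ?_⟩
  have h0 : (Polynomial.aeval C) (g ^ k - Polynomial.X) = 0 := by
    rw [hq, map_mul, Matrix.aeval_self_charpoly, zero_mul]
  have := sub_eq_zero.mp (by simpa using h0)
  simpa using this.symm
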